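/- Let p be a prime, k ≥ 1 a natural number, and n a natural number divisible by φ(p^(k+1)), where φ is Euler's totient function. If m is a natural number with 2 ≤ m < p^(k+1), then for every nonnegative integer b and every natural number s ≥ 1, the number of m-tuples (x_1,…,x_m) of nonnegative integers with x_1^n + ⋯ + x_m^n = b·(p^s)^n equals the number of m-tuples of nonnegative integers with x_1^n + ⋯ + x_m^n = b. -/

import Mathlib

/-- If `p` is prime, `k ≥ 1`, `φ(p^(k+1)) ∣ n` and `2 ≤ m < p^(k+1)`, then for every `b` and
every `s ≥ 1` the number of `m`-tuples of nonnegative integers with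
`x₁^n + ⋯ + x_m^n = b·(p^s)^n` equals the number with `x₁^n + ⋯ + x_m^n = b`. -/
theorem stmt_3 (p k n m : ℕ) (hp : p.Prime) (hk : 1 ≤ k)
    (hdvd : Nat.totient (p ^ (k + 1)) ∣ n) (hm : 2 ≤ m) (hmp : m < p ^ (k + 1)) :
    ∀ b s : ℕ, 1 ≤ s →
      Nat.card {x : Fin m → ℕ // ∑ i, x i ^ n = b * (p ^ s) ^ n} =
      Nat.card {x : Fin m → ℕ // ∑ i, x i ^ n = b} := by
  rcases Nat.eq_zero_or_pos n with hn | hn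
  · subst hn; simp
  set N := p ^ (k + 1) with hNdef
  have hN : 0 < N := pow_pos hp.pos _
  haveI : NeZero N := ⟨hN.ne'⟩
  have hnk : k + 1 ≤ n := by
    have h1 : k + 1 ≤ 2 ^ k := Nat.lt_two_pow_self (n := k)
    have h2 : 2 ^ k ≤ p ^ k := Nat.pow_le_pow_left hp.two_le k
    have h3 : p ^ k ≤ p ^ k * (p - 1) :=
      Nat.le_mul_of_pos_right _ (Nat.sub_pos_of_lt hp.one_lt)
    have h4 : Nat.totient N = p ^ k * (p - 1) := by
      rw [hNdef, Nat.totient_prime_pow hp (Nat.succ_pos k)]; simp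
    have h5 : Nat.totient N ≤ n := Nat.le_of_dvd hn hdvd
    omega
  have hNdvd : N ∣ p ^ n := pow_dvd_pow p hnk
  -- key: all coordinates of a solution of ∑ = c * p^n are divisible by p
  have key : ∀ c (x : Fin m → ℕ), (∑ i, x i ^ n = c * p ^ n) → ∀ i, p ∣ x i := by
    intro c x hx i
    by_contra hpi
    have hcast : ∀ j, ((x j ^ n : ℕ) : ZMod N) = if p ∣ x j then 0 else 1 := by
      intro j
      split_ifs with h
      · exact (ZMod.natCast_eq_zero_iff _ _).mpr
          (hNdvd.trans (pow_dvd_pow_of_dvd h n))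
      · have hco : Nat.Coprime (x j) N :=
          ((hp.coprime_iff_not_dvd.mpr h).symm).pow_right (k + 1)
        obtain ⟨q, hq⟩ := hdvd
        have hmod : x j ^ n ≡ 1 [MOD N] := by
          have := (Nat.ModEq.pow_totient hco).pow q
          rwa [← pow_mul, one_pow, ← hq] at this
        have := (ZMod.natCast_eq_natCast_iff _ _ _).mpr hmod
        simpa using this
    set T := Finset.univ.filter (fun j : Fin m => ¬ p ∣ x j) with hT
    have hsum : ((∑ j, x j ^ n : ℕ) : ZMod N) = (T.card : ZMod N) := by
      rw [Nat.cast_sum, Finset.sum_congr rfl (fun j _ => hcast j), hT,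
        Finset.card_filter, Nat.cast_sum]
      exact Finset.sum_congr rfl (fun j _ => by split_ifs <;> simp_all)
    have hrhs : ((c * p ^ n : ℕ) : ZMod N) = 0 :=
      (ZMod.natCast_eq_zero_iff _ _).mpr (Dvd.dvd.mul_left hNdvd c)
    have hTzero : (T.card : ZMod N) = 0 := by rw [← hsum, hx, hrhs]
    have hTdvd : N ∣ T.card := (ZMod.natCast_eq_zero_iff _ _).mp hTzero
    have hTlt : T.card < N := lt_of_le_of_lt (le_trans (Finset.card_filter_le _ _)
      (by simp)) hmp
    have hT0 : T.card = 0 := Nat.eq_zero_of_dvd_of_lt hTdvd hTlt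
    have : i ∈ T := Finset.mem_filter.mpr ⟨Finset.mem_univ i, hpi⟩
    rw [Finset.card_eq_zero] at hT0
    simp [hT0] at this
  -- core step: dividing by p gives a bijection
  have core : ∀ c, Nat.card {x : Fin m → ℕ // ∑ i, x i ^ n = c * p ^ n} =
      Nat.card {x : Fin m → ℕ // ∑ i, x i ^ n = c} := by
    intro c
    apply Nat.card_congr
    refine ⟨fun x => ⟨fun i => x.1 i / p, ?_⟩, fun y => ⟨fun i => p * y.1 i, ?_⟩, ?_, ?_⟩
    · obtain ⟨x, hx2⟩ := x
      have hd := key c x hx2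
      have h2 : ∑ i, (p * (x i / p)) ^ n = c * p ^ n := by
        rw [← hx2]
        exact Finset.sum_congr rfl fun i _ => by rw [Nat.mul_div_cancel' (hd i)]
      simp_rw [mul_pow, ← Finset.mul_sum] at h2
      rw [mul_comm c] at h2
      exact Nat.eq_of_mul_eq_mul_left (pow_pos hp.pos n) h2
    · obtain ⟨y, hy2⟩ := y
      simp only
      simp_rw [mul_pow, ← Finset.mul_sum, hy2, mul_comm]
    · intro x
      ext i
      exact Nat.mul_div_cancel' (key c x.1 x.2 i)
    · intro y
      ext i
      exact Nat.mul_div_cancel_left _ hp.pos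
  intro b s hs
  clear hs hm
  induction s with
  | zero => simp
  | succ s ih =>
    have hsplit : b * (p ^ (s + 1)) ^ n = (b * (p ^ s) ^ n) * p ^ n := by ring
    rw [hsplit, core, ih]
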